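/- If S is an LPDS of the king grid with partner map m, and v₁ = (a+1,b) and v₂ = (a−1,b) are both in S, suppose further that for i = 1,2: vᵢ is in a far pair, N(vᵢ) ∩ S = {m(vᵢ)}, and no pendant neighbor of vᵢ lies in ⋃_{w∈S} I(w). Then each of v₁ and v₂ has at least two pendant neighbors u ∉ S ∪ ⋃_{w∈S} I(w) with |N(u) ∩ S| ≥ 3. -/

import Mathlib

/-- The king grid on `ℤ × ℤ`: distinct vertices are adjacent iff both
coordinates differ by at most 1 (equivalently, Euclidean distance ≤ √2). -/
def kingGrid : SimpleGraph (ℤ × ℤ) where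
  Adj u v := u ≠ v ∧ |u.1 - v.1| ≤ 1 ∧ |u.2 - v.2| ≤ 1
  symm := ⟨by
    rintro u v ⟨h, h1, h2⟩
    refine ⟨h.symm, ?_, ?_⟩ <;> rw [abs_sub_comm] <;> assumption⟩
  loopless := ⟨fun v h => h.1 rfl⟩

/-- Open neighborhood in the king grid. -/
def N (v : ℤ × ℤ) : Set (ℤ × ℤ) := kingGrid.neighborSet v

/-- Closed neighborhood in the king grid. -/
def Ncl (v : ℤ × ℤ) : Set (ℤ × ℤ) := insert v (kingGrid.neighborSet v)

/-- `S` is a dominating set of the king grid. -/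
def IsDominating (S : Set (ℤ × ℤ)) : Prop := ∀ u : ℤ × ℤ, (Ncl u ∩ S).Nonempty

/-- `S` is locating: distinct vertices outside `S` have distinct neighborhoods in `S`. -/
def IsLocating (S : Set (ℤ × ℤ)) : Prop :=
  ∀ u v : ℤ × ℤ, u ∉ S → v ∉ S → u ≠ v → N u ∩ S ≠ N v ∩ S

/-- `m` is the partner map of a perfect matching of the induced subgraph on `S`. -/
def IsPartnerMap (S : Set (ℤ × ℤ)) (m : ℤ × ℤ → ℤ × ℤ) : Prop :=
  ∀ v ∈ S, m v ∈ S ∧ kingGrid.Adj v (m v) ∧ m (m v) = v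

/-- `S` is a locating-paired-dominating set with matching partner map `m`. -/
def IsLPDS (S : Set (ℤ × ℤ)) (m : ℤ × ℤ → ℤ × ℤ) : Prop :=
  IsDominating S ∧ IsLocating S ∧ IsPartnerMap S m

/-- Pendant neighbors of `v` (relative to the partner map `m`). -/
def P (m : ℤ × ℤ → ℤ × ℤ) (v : ℤ × ℤ) : Set (ℤ × ℤ) := N v \ Ncl (m v)

/-- Interval neighbors of `v` (relative to the partner map `m`). -/
def I (m : ℤ × ℤ → ℤ × ℤ) (v : ℤ × ℤ) : Set (ℤ × ℤ) := N v ∩ N (m v)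

/-- The union of all interval neighborhoods. -/
def Iset (S : Set (ℤ × ℤ)) (m : ℤ × ℤ → ℤ × ℤ) : Set (ℤ × ℤ) := ⋃ w ∈ S, I m w

lemma adj_iff {u v : ℤ × ℤ} : kingGrid.Adj u v ↔ u ≠ v ∧ |u.1 - v.1| ≤ 1 ∧ |u.2 - v.2| ≤ 1 := Iff.rfl

lemma mem_N_iff {u v : ℤ × ℤ} : u ∈ N v ↔
    ¬(u.1 = v.1 ∧ u.2 = v.2) ∧ v.1 - u.1 ≤ 1 ∧ u.1 - v.1 ≤ 1 ∧ v.2 - u.2 ≤ 1 ∧ u.2 - v.2 ≤ 1 := by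
  rw [N, SimpleGraph.mem_neighborSet, adj_iff, abs_sub_le_iff, abs_sub_le_iff, ne_eq, Prod.ext_iff]
  omega

lemma N_finite (v : ℤ × ℤ) : (N v).Finite := by
  apply (Set.finite_Icc (v.1 - 1, v.2 - 1) (v.1 + 1, v.2 + 1)).subset
  rintro u hu
  rw [mem_N_iff] at hu
  simp only [Set.mem_Icc, Prod.mk_le_mk, Prod.le_def]
  omega

lemma ncard_ge_three {T : Set (ℤ × ℤ)} (hfin : T.Finite) {w1 w2 w3 : ℤ × ℤ}
    (h1 : w1 ∈ T) (h2 : w2 ∈ T) (h3 : w3 ∈ T)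
    (d12 : w1 ≠ w2) (d13 : w1 ≠ w3) (d23 : w2 ≠ w3) : 3 ≤ T.ncard := by
  have h3' : ({w1, w2, w3} : Set (ℤ × ℤ)).ncard = 3 :=
    Set.ncard_eq_three.mpr ⟨w1, w2, w3, d12, d13, d23, rfl⟩
  rw [← h3']
  refine Set.ncard_le_ncard ?_ hfin
  rintro x hx
  simp only [Set.mem_insert_iff, Set.mem_singleton_iff] at hx
  rcases hx with h|h|h <;> subst h <;> assumption

lemma far_ncard {v w : ℤ × ℤ} (h1 : w.1 = v.1) (h2 : w.2 = v.2 + 1 ∨ w.2 = v.2 - 1) :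
    3 ≤ (N v ∩ N w).ncard := by
  have hfin : (N v ∩ N w).Finite := (N_finite v).inter_of_left _
  rcases h2 with h2 | h2
  · exact ncard_ge_three hfin
      (w1 := (v.1 - 1, v.2)) (w2 := (v.1 + 1, v.2)) (w3 := (v.1 - 1, v.2 + 1))
      ⟨mem_N_iff.mpr (by omega), mem_N_iff.mpr (by omega)⟩
      ⟨mem_N_iff.mpr (by omega), mem_N_iff.mpr (by omega)⟩
      ⟨mem_N_iff.mpr (by omega), mem_N_iff.mpr (by omega)⟩
      (fun he => by rw [Prod.ext_iff] at he; omega) (fun he => by rw [Prod.ext_iff] at he; omega) (fun he => by rw [Prod.ext_iff] at he; omega)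
  · exact ncard_ge_three hfin
      (w1 := (v.1 - 1, v.2)) (w2 := (v.1 + 1, v.2)) (w3 := (v.1 - 1, v.2 - 1))
      ⟨mem_N_iff.mpr (by omega), mem_N_iff.mpr (by omega)⟩
      ⟨mem_N_iff.mpr (by omega), mem_N_iff.mpr (by omega)⟩
      ⟨mem_N_iff.mpr (by omega), mem_N_iff.mpr (by omega)⟩
      (fun he => by rw [Prod.ext_iff] at he; omega) (fun he => by rw [Prod.ext_iff] at he; omega) (fun he => by rw [Prod.ext_iff] at he; omega)

theorem claim_two_T3_pendants (S : Set (ℤ × ℤ)) (m : ℤ × ℤ → ℤ × ℤ)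
    (h : IsLPDS S m) (a b : ℤ) (v1 v2 : ℤ × ℤ)
    (hv1 : v1 = (a + 1, b)) (hv2 : v2 = (a - 1, b))
    (hv1S : v1 ∈ S) (hv2S : v2 ∈ S)
    (hfar1 : (N v1 ∩ N (m v1)).ncard = 2) (hfar2 : (N v2 ∩ N (m v2)).ncard = 2)
    (hN1 : N v1 ∩ S = {m v1}) (hN2 : N v2 ∩ S = {m v2})
    (hI1 : P m v1 ∩ Iset S m = ∅) (hI2 : P m v2 ∩ Iset S m = ∅) :
    (∃ u1 ∈ P m v1, ∃ u2 ∈ P m v1, u1 ≠ u2 ∧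
      u1 ∉ S ∧ u2 ∉ S ∧ u1 ∉ Iset S m ∧ u2 ∉ Iset S m ∧
      3 ≤ (N u1 ∩ S).ncard ∧ 3 ≤ (N u2 ∩ S).ncard) ∧
    (∃ u1 ∈ P m v2, ∃ u2 ∈ P m v2, u1 ≠ u2 ∧
      u1 ∉ S ∧ u2 ∉ S ∧ u1 ∉ Iset S m ∧ u2 ∉ Iset S m ∧
      3 ≤ (N u1 ∩ S).ncard ∧ 3 ≤ (N u2 ∩ S).ncard) := by
  obtain ⟨hD, hL, hP⟩ := h
  obtain ⟨hm1S, hadj1, hmm1⟩ := hP v1 hv1S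
  obtain ⟨hm2S, hadj2, hmm2⟩ := hP v2 hv2S
  subst hv1 hv2
  have hne12 : m (a+1,b) ≠ m (a-1,b) := by
    intro he
    have h1 := hmm1
    rw [he, hmm2] at h1
    rw [Prod.mk.injEq] at h1
    omega
  have hb1 : ¬((m (a+1,b)).1 = a+1 ∧ (m (a+1,b)).2 = b) ∧ (a+1) - (m (a+1,b)).1 ≤ 1 ∧
      (m (a+1,b)).1 - (a+1) ≤ 1 ∧ b - (m (a+1,b)).2 ≤ 1 ∧ (m (a+1,b)).2 - b ≤ 1 :=
    mem_N_iff.mp hadj1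
  have hb2 : ¬((m (a-1,b)).1 = a-1 ∧ (m (a-1,b)).2 = b) ∧ (a-1) - (m (a-1,b)).1 ≤ 1 ∧
      (m (a-1,b)).1 - (a-1) ≤ 1 ∧ b - (m (a-1,b)).2 ≤ 1 ∧ (m (a-1,b)).2 - b ≤ 1 :=
    mem_N_iff.mp hadj2
  have hx1 : (m (a+1,b)).1 = a + 2 := by
    rcases (by omega : (m (a+1,b)).1 = a ∨ (m (a+1,b)).1 = a+1 ∨ (m (a+1,b)).1 = a+2)
      with hc | hc | hc
    · exfalso
      have hmemN2 : m (a+1,b) ∈ N (a-1,b) := mem_N_iff.mpr (by omega)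
      have hmem : m (a+1,b) ∈ N (a-1,b) ∩ S := ⟨hmemN2, hm1S⟩
      rw [hN2] at hmem
      exact hne12 hmem
    · exfalso
      have h3 := far_ncard (v := (a+1,b)) (w := m (a+1,b)) (by omega) (by omega)
      omega
    · exact hc
  have hx2 : (m (a-1,b)).1 = a - 2 := by
    rcases (by omega : (m (a-1,b)).1 = a ∨ (m (a-1,b)).1 = a-1 ∨ (m (a-1,b)).1 = a-2)
      with hc | hc | hc
    · exfalso
      have hmemN1 : m (a-1,b) ∈ N (a+1,b) := mem_N_iff.mpr (by omega)
      have hmem : m (a-1,b) ∈ N (a+1,b) ∩ S := ⟨hmemN1, hm2S⟩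
      rw [hN1] at hmem
      exact hne12 hmem.symm
    · exfalso
      have h3 := far_ncard (v := (a-1,b)) (w := m (a-1,b)) (by omega) (by omega)
      omega
    · exact hc
  have key : ∀ p : ℤ × ℤ, p.1 = a → b - 1 ≤ p.2 → p.2 ≤ b + 1 →
      p ∈ P m (a+1,b) ∧ p ∈ P m (a-1,b) ∧ p ∉ S ∧ p ∉ Iset S m ∧
      (a+1,b) ∈ N p ∩ S ∧ (a-1,b) ∈ N p ∩ S := by
    intro p hp1 hp2 hp3
    have hpN1 : p ∈ N (a+1,b) := mem_N_iff.mpr (by omega)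
    have hpN2 : p ∈ N (a-1,b) := mem_N_iff.mpr (by omega)
    have hP1 : p ∈ P m (a+1,b) := by
      refine ⟨hpN1, fun hcl => ?_⟩
      have hcl' : p = m (a+1,b) ∨ p ∈ N (m (a+1,b)) := hcl
      rcases hcl' with he | hadj
      · rw [he] at hp1; omega
      · have hbb := mem_N_iff.mp hadj; omega
    have hP2 : p ∈ P m (a-1,b) := by
      refine ⟨hpN2, fun hcl => ?_⟩
      have hcl' : p = m (a-1,b) ∨ p ∈ N (m (a-1,b)) := hcl
      rcases hcl' with he | hadj
      · rw [he] at hp1; omega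
      · have hbb := mem_N_iff.mp hadj; omega
    have hpS : p ∉ S := by
      intro hS
      have e1 : p ∈ N (a+1,b) ∩ S := ⟨hpN1, hS⟩
      have e2 : p ∈ N (a-1,b) ∩ S := ⟨hpN2, hS⟩
      rw [hN1] at e1
      rw [hN2] at e2
      exact hne12 (e1.symm.trans e2)
    have hpI : p ∉ Iset S m := by
      intro hI
      have : p ∈ P m (a+1,b) ∩ Iset S m := ⟨hP1, hI⟩
      rw [hI1] at this
      exact this
    exact ⟨hP1, hP2, hpS, hpI, ⟨mem_N_iff.mpr (by omega), hv1S⟩, ⟨mem_N_iff.mpr (by omega), hv2S⟩⟩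
  have hc1 := key (a, b-1) rfl (by omega) (by omega)
  have hc2 := key (a, b) rfl (by omega) (by omega)
  have hc3 := key (a, b+1) rfl (by omega) (by omega)
  have d12 : ((a, b-1) : ℤ × ℤ) ≠ (a, b) := fun he => by rw [Prod.mk.injEq] at he; omega
  have d13 : ((a, b-1) : ℤ × ℤ) ≠ (a, b+1) := fun he => by rw [Prod.mk.injEq] at he; omega
  have d23 : ((a, b) : ℤ × ℤ) ≠ (a, b+1) := fun he => by rw [Prod.mk.injEq] at he; omega
  have hbig : ∀ p : ℤ × ℤ, (a+1,b) ∈ N p ∩ S → (a-1,b) ∈ N p ∩ S →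
      N p ∩ S ≠ {(a+1,b),(a-1,b)} → 3 ≤ (N p ∩ S).ncard := by
    intro p hm1 hm2 hne
    have hsub : ({(a+1,b),(a-1,b)} : Set (ℤ×ℤ)) ⊆ N p ∩ S := by
      intro x hx
      simp only [Set.mem_insert_iff, Set.mem_singleton_iff] at hx
      rcases hx with rfl | rfl <;> assumption
    obtain ⟨w, hw, hwp⟩ := Set.exists_of_ssubset (lt_of_le_of_ne hsub hne.symm)
    refine ncard_ge_three ((N_finite p).inter_of_left _) hm1 hm2 hw
      (fun he => by rw [Prod.mk.injEq] at he; omega) ?_ ?_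
    · intro he; apply hwp; rw [← he]; exact Set.mem_insert _ _
    · intro he; apply hwp; rw [← he]; exact Set.mem_insert_of_mem _ rfl
  obtain ⟨p, q, hpq, hpsel, hqsel, hpg, hqg⟩ :
      ∃ p q : ℤ × ℤ, p ≠ q ∧ (p = (a,b-1) ∨ p = (a,b) ∨ p = (a,b+1)) ∧
        (q = (a,b-1) ∨ q = (a,b) ∨ q = (a,b+1)) ∧
        3 ≤ (N p ∩ S).ncard ∧ 3 ≤ (N q ∩ S).ncard := by
    by_cases h1 : N (a, b-1) ∩ S = {(a+1,b),(a-1,b)}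
    · refine ⟨(a,b), (a,b+1), d23, Or.inr (Or.inl rfl), Or.inr (Or.inr rfl), ?_, ?_⟩
      · exact hbig _ hc2.2.2.2.2.1 hc2.2.2.2.2.2
          (fun he => hL (a,b) (a,b-1) hc2.2.2.1 hc1.2.2.1 d12.symm (he.trans h1.symm))
      · exact hbig _ hc3.2.2.2.2.1 hc3.2.2.2.2.2
          (fun he => hL (a,b+1) (a,b-1) hc3.2.2.1 hc1.2.2.1 d13.symm (he.trans h1.symm))
    · by_cases h2 : N (a, b) ∩ S = {(a+1,b),(a-1,b)}
      · refine ⟨(a,b-1), (a,b+1), d13, Or.inl rfl, Or.inr (Or.inr rfl), ?_, ?_⟩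
        · exact hbig _ hc1.2.2.2.2.1 hc1.2.2.2.2.2 h1
        · exact hbig _ hc3.2.2.2.2.1 hc3.2.2.2.2.2
            (fun he => hL (a,b+1) (a,b) hc3.2.2.1 hc2.2.2.1 d23.symm (he.trans h2.symm))
      · exact ⟨(a,b-1), (a,b), d12, Or.inl rfl, Or.inr (Or.inl rfl),
          hbig _ hc1.2.2.2.2.1 hc1.2.2.2.2.2 h1, hbig _ hc2.2.2.2.2.1 hc2.2.2.2.2.2 h2⟩
  have getk : ∀ r : ℤ × ℤ, (r = (a,b-1) ∨ r = (a,b) ∨ r = (a,b+1)) →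
      r ∈ P m (a+1,b) ∧ r ∈ P m (a-1,b) ∧ r ∉ S ∧ r ∉ Iset S m := by
    rintro r (rfl | rfl | rfl)
    · exact ⟨hc1.1, hc1.2.1, hc1.2.2.1, hc1.2.2.2.1⟩
    · exact ⟨hc2.1, hc2.2.1, hc2.2.2.1, hc2.2.2.2.1⟩
    · exact ⟨hc3.1, hc3.2.1, hc3.2.2.1, hc3.2.2.2.1⟩
  obtain ⟨kp1, kp2, kpS, kpI⟩ := getk p hpsel
  obtain ⟨kq1, kq2, kqS, kqI⟩ := getk q hqsel
  exact ⟨⟨p, kp1, q, kq1, hpq, kpS, kqS, kpI, kqI, hpg, hqg⟩,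
    ⟨p, kp2, q, kq2, hpq, kpS, kqS, kpI, kqI, hpg, hqg⟩⟩
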